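/- In the James space $\mathcal J_p$ ($1 < p < \infty$), with $x_n = \sum_{i=1}^n e_i$, there exists $C > 0$ such that for all $k$ and all $n_1 < n_2 < \cdots < n_{2k}$, $\|\sum_{j=1}^{2k} (-1)^j x_{n_j}\|_{\mathcal J_p} \le C k^{1/p}$. -/

import Mathlib

open Finset

/-- The `t`-th coordinate of `∑_j (-1)^j x_{n_j}`. -/
def jamesGfun (k : ℕ) (n : Fin (2 * k) → ℕ) (t : ℕ) : ℝ :=
  ∑ j : Fin (2 * k), (-1 : ℝ) ^ (j : ℕ) * (if t ≤ n j then 1 else 0)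

/-- Alternating sums of a monotone 0/1 sequence are bounded by 1. -/
lemma james_alt_sum_bound (c : ℕ → ℝ) (h01 : ∀ j, c j = 0 ∨ c j = 1)
    (hmono : ∀ i j, i ≤ j → c i ≤ c j) (N : ℕ) :
    |∑ j ∈ Finset.range N, (-1 : ℝ) ^ j * c j| ≤ 1 := by
  suffices h : (∑ j ∈ Finset.range N, (-1:ℝ)^j * c j = 0) ∨
      (∃ M, N = M + 1 ∧ ∑ j ∈ Finset.range N, (-1:ℝ)^j * c j = (-1)^M * c M) by
    rcases h with h | ⟨M, _, h⟩
    · simp [h]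
    · rw [h, abs_mul, abs_pow, abs_neg, abs_one, one_pow, one_mul]
      rcases h01 M with h' | h' <;> simp [h']
  induction N with
  | zero => left; simp
  | succ N ih =>
    rw [Finset.sum_range_succ]
    rcases ih with h | ⟨M, rfl, h⟩
    · rw [h, zero_add]
      rcases h01 N with h' | h'
      · left; simp [h']
      · right; exact ⟨N, rfl, rfl⟩
    · rw [h]
      have hc : c M ≤ c (M + 1) := hmono M (M + 1) (Nat.le_succ M)
      rcases h01 M with h1 | h1 <;> rcases h01 (M + 1) with h2 | h2
      · left; simp [h1, h2]
      · right; exact ⟨M + 1, rfl, by simp [h1]⟩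
      · exfalso; rw [h1, h2] at hc; linarith
      · left; rw [h1, h2, pow_succ]; ring

/-- In the James space `𝒥_p`, with `x_n = ∑_{i=1}^n e_i`, there is `C > 0` such that for
all `k` and all `n₁ < ⋯ < n_{2k}`, `‖∑_{j=1}^{2k} (-1)^j x_{n_j}‖_{𝒥_p} ≤ C k^{1/p}`.
The `𝒥_p`-norm is the supremum, over finite increasing tuples `P₀ < ⋯ < P_r`, of the
`p`-variation sums; here the vector `∑_j (-1)^j x_{n_j}` has `t`-th coordinate
`∑_j (-1)^j [t ≤ n_j]`. -/
theorem james_alternating_sums_upper_bound (p : ℝ) (hp : 1 < p) :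
    ∃ C > (0 : ℝ), ∀ (k : ℕ) (n : Fin (2 * k) → ℕ), StrictMono n →
      ∀ (r : ℕ) (P : Fin (r + 1) → ℕ), StrictMono P →
        (∑ i : Fin r,
            |(∑ j : Fin (2 * k), (-1 : ℝ) ^ (j : ℕ) * (if P i.succ ≤ n j then 1 else 0)) -
              (∑ j : Fin (2 * k), (-1 : ℝ) ^ (j : ℕ) *
                (if P i.castSucc ≤ n j then 1 else 0))| ^ p) ^ (1 / p) ≤
          C * (k : ℝ) ^ (1 / p) := by
  have hp' : 0 < p := lt_trans one_pos hp
  refine ⟨4, by norm_num, ?_⟩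
  intro k n hn r P hP
  -- coordinates are bounded by 1 in absolute value
  have hg : ∀ t, |jamesGfun k n t| ≤ 1 := by
    intro t
    set c : ℕ → ℝ := fun j => if h : j < 2 * k then (if t ≤ n ⟨j, h⟩ then 1 else 0) else 1
      with hcdef
    have hgt : jamesGfun k n t = ∑ j ∈ Finset.range (2 * k), (-1 : ℝ) ^ j * c j := by
      unfold jamesGfun
      rw [← Fin.sum_univ_eq_sum_range (fun j => (-1 : ℝ) ^ j * c j)]
      refine Finset.sum_congr rfl fun j _ => ?_
      simp [hcdef, j.isLt]
    rw [hgt]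
    refine james_alt_sum_bound c ?_ ?_ (2 * k)
    · intro j
      simp only [hcdef]
      split_ifs <;> simp
    · intro i j hij
      by_cases hj : j < 2 * k
      · have hi : i < 2 * k := lt_of_le_of_lt hij hj
        simp only [hcdef, dif_pos hi, dif_pos hj]
        by_cases ht : t ≤ n ⟨i, hi⟩
        · have h2 : t ≤ n ⟨j, hj⟩ := le_trans ht (hn.monotone (Fin.mk_le_mk.mpr hij))
          simp [ht, h2]
        · split_ifs <;> norm_num
      · simp only [hcdef, dif_neg hj]
        split_ifs <;> norm_num
  set S : Fin r → Finset (Fin (2 * k)) :=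
    fun i => Finset.univ.filter (fun j => P i.castSucc ≤ n j ∧ n j < P i.succ) with hSdef
  have hsub : ∀ i : Fin r,
      jamesGfun k n (P i.succ) - jamesGfun k n (P i.castSucc)
        = ∑ j : Fin (2 * k), (-1 : ℝ) ^ (j : ℕ) *
            ((if P i.succ ≤ n j then 1 else 0) - (if P i.castSucc ≤ n j then 1 else 0)) := by
    intro i
    unfold jamesGfun
    rw [← Finset.sum_sub_distrib]
    exact Finset.sum_congr rfl fun j _ => by ring
  have hzero : ∀ i : Fin r, S i = ∅ →
      jamesGfun k n (P i.succ) - jamesGfun k n (P i.castSucc) = 0 := by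
    intro i hSi
    rw [hsub i]
    refine Finset.sum_eq_zero fun j _ => ?_
    have hj : ¬(P i.castSucc ≤ n j ∧ n j < P i.succ) := by
      intro hcon
      have := Finset.eq_empty_iff_forall_notMem.mp hSi j
      exact this (Finset.mem_filter.mpr ⟨Finset.mem_univ j, hcon⟩)
    have hPc : P i.castSucc ≤ P i.succ := hP.monotone (Fin.castSucc_lt_succ (i := i)).le
    by_cases h1 : P i.succ ≤ n j
    · have h2 : P i.castSucc ≤ n j := le_trans hPc h1
      simp [h1, h2]
    · have h2 : ¬ P i.castSucc ≤ n j := fun hh => hj ⟨hh, lt_of_not_ge h1⟩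
      simp [h1, h2]
  have hkey : ∀ i : Fin r,
      |jamesGfun k n (P i.succ) - jamesGfun k n (P i.castSucc)| ^ p
        ≤ 2 ^ p * ((S i).card : ℝ) := by
    intro i
    by_cases hSi : S i = ∅
    · rw [hzero i hSi, hSi]
      simp [Real.zero_rpow (ne_of_gt hp')]
    · have hcard : (1 : ℝ) ≤ ((S i).card : ℝ) := by
        exact_mod_cast Finset.card_pos.mpr (Finset.nonempty_iff_ne_empty.mpr hSi)
      have hb1 := abs_le.mp (hg (P i.succ))
      have hb2 := abs_le.mp (hg (P i.castSucc))
      have h2 : |jamesGfun k n (P i.succ) - jamesGfun k n (P i.castSucc)| ≤ 2 := by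
        rw [abs_le]; constructor <;> linarith [hb1.1, hb1.2, hb2.1, hb2.2]
      calc |jamesGfun k n (P i.succ) - jamesGfun k n (P i.castSucc)| ^ p
          ≤ 2 ^ p := Real.rpow_le_rpow (abs_nonneg _) h2 hp'.le
        _ ≤ 2 ^ p * ((S i).card : ℝ) := le_mul_of_one_le_right (by positivity) hcard
  -- the intervals are disjoint, so the total count is at most 2k
  have hdisj : ∀ i ∈ (Finset.univ : Finset (Fin r)), ∀ i' ∈ (Finset.univ : Finset (Fin r)),
      i ≠ i' → Disjoint (S i) (S i') := by
    intro i _ i' _ hne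
    rw [Finset.disjoint_left]
    intro j hj hj'
    obtain ⟨-, h1, h2⟩ := Finset.mem_filter.mp hj
    obtain ⟨-, h1', h2'⟩ := Finset.mem_filter.mp hj'
    rcases hne.lt_or_gt with hlt | hlt
    · have hle : (i.succ : Fin (r + 1)) ≤ i'.castSucc := by
        rw [Fin.le_def]
        simp only [Fin.val_succ, Fin.val_castSucc]
        have := Fin.lt_def.mp hlt
        omega
      have := hP.monotone hle
      omega
    · have hle : (i'.succ : Fin (r + 1)) ≤ i.castSucc := by
        rw [Fin.le_def]
        simp only [Fin.val_succ, Fin.val_castSucc]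
        have := Fin.lt_def.mp hlt
        omega
      have := hP.monotone hle
      omega
  have hcount : ∑ i : Fin r, (S i).card ≤ 2 * k := by
    rw [← Finset.card_biUnion hdisj]
    calc (Finset.univ.biUnion S).card ≤ (Finset.univ : Finset (Fin (2 * k))).card :=
          Finset.card_le_card (Finset.subset_univ _)
      _ = 2 * k := by simp
  have hsum : ∑ i : Fin r,
      |jamesGfun k n (P i.succ) - jamesGfun k n (P i.castSucc)| ^ p
        ≤ 2 ^ p * (2 * (k : ℝ)) := by
    calc ∑ i : Fin r, |jamesGfun k n (P i.succ) - jamesGfun k n (P i.castSucc)| ^ p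
        ≤ ∑ i : Fin r, 2 ^ p * ((S i).card : ℝ) := Finset.sum_le_sum fun i _ => hkey i
      _ = 2 ^ p * ∑ i : Fin r, ((S i).card : ℝ) := by rw [← Finset.mul_sum]
      _ ≤ 2 ^ p * (2 * (k : ℝ)) := by
          apply mul_le_mul_of_nonneg_left _ (by positivity)
          calc ∑ i : Fin r, ((S i).card : ℝ) = ((∑ i : Fin r, (S i).card : ℕ) : ℝ) := by
                push_cast; ring
            _ ≤ 2 * (k : ℝ) := by exact_mod_cast hcount
  show (∑ i : Fin r,
      |jamesGfun k n (P i.succ) - jamesGfun k n (P i.castSucc)| ^ p) ^ (1 / p)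
        ≤ 4 * (k : ℝ) ^ (1 / p)
  have hL : (∑ i : Fin r,
      |jamesGfun k n (P i.succ) - jamesGfun k n (P i.castSucc)| ^ p) ^ (1 / p)
        ≤ (2 ^ p * (2 * (k : ℝ))) ^ (1 / p) :=
    Real.rpow_le_rpow (Finset.sum_nonneg fun i _ => Real.rpow_nonneg (abs_nonneg _) p)
      hsum (by positivity)
  refine le_trans hL ?_
  have hsplit : ((2 : ℝ) ^ p * (2 * (k : ℝ))) ^ (1 / p)
      = ((2 : ℝ) ^ p) ^ (1 / p) * ((2 : ℝ) ^ (1 / p) * (k : ℝ) ^ (1 / p)) := by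
    rw [Real.mul_rpow (by positivity) (by positivity),
        Real.mul_rpow (by norm_num) (by positivity)]
  rw [hsplit, ← Real.rpow_mul (by norm_num : (0:ℝ) ≤ 2),
      mul_one_div_cancel (ne_of_gt hp'), Real.rpow_one]
  have h2p : (2 : ℝ) ^ (1 / p) ≤ 2 := by
    calc (2 : ℝ) ^ (1 / p) ≤ (2 : ℝ) ^ (1 : ℝ) :=
          Real.rpow_le_rpow_of_exponent_le (by norm_num) ((div_le_one hp').mpr hp.le)
      _ = 2 := Real.rpow_one 2
  have hk : (0 : ℝ) ≤ (k : ℝ) ^ (1 / p) := Real.rpow_nonneg (by positivity) _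
  nlinarith [mul_le_mul_of_nonneg_right h2p hk]
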